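/- Let (Ω, 𝓕) be a measurable space and let X be a linear space of bounded 𝓕-measurable functions f : Ω → ℝ containing the indicator function 1_A for every A ∈ 𝓕. Let φ : X → ℝ ∪ {+∞} be an increasing convex functional. Then for every f in the algebraic interior I(φ) of the effective domain of φ, the supremum sup over μ ∈ ba⁺(𝓕) of (⟨f,μ⟩ − φ*_X(μ)) equals φ(f) and is attained, i.e. φ(f) = max_{μ ∈ ba⁺(𝓕)} (⟨f,μ⟩ − φ*_X(μ)). -/

import Mathlib

open MeasureTheory Filter Topology Set

/-- A finitely additive nonnegative measure with finite total mass on a measurable space. -/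
structure FinAddMeasure (Ω : Type*) [MeasurableSpace Ω] where
  meas : Set Ω → ℝ
  nonneg : ∀ A, 0 ≤ meas A
  empty : meas ∅ = 0
  additive : ∀ A B : Set Ω, MeasurableSet A → MeasurableSet B → Disjoint A B →
    meas (A ∪ B) = meas A + meas B

/-- Elementary integral of a simple function with respect to a finitely additive measure. -/
noncomputable def FinAddMeasure.simpleIntegral {Ω : Type*} [MeasurableSpace Ω]
    (μ : FinAddMeasure Ω) (g : SimpleFunc Ω ℝ) : ℝ :=
  ∑ x ∈ g.range, x * μ.meas (g ⁻¹' {x})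

/-- Integral ⟨f,μ⟩ of a (bounded measurable) function with respect to a finitely additive
measure, defined as the supremum of elementary integrals of simple functions below `f`. -/
noncomputable def FinAddMeasure.integral {Ω : Type*} [MeasurableSpace Ω]
    (μ : FinAddMeasure Ω) (f : Ω → ℝ) : ℝ :=
  sSup {r | ∃ g : SimpleFunc Ω ℝ, (∀ ω, g ω ≤ f ω) ∧ r = μ.simpleIntegral g}

/-- The convex conjugate φ*_X of an increasing convex functional on a space `X` of bounded
measurable functions, evaluated at a finitely additive measure. -/
noncomputable def faConj {Ω : Type*} [MeasurableSpace Ω] (X : Submodule ℝ (Ω → ℝ))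
    (φ : X → EReal) (μ : FinAddMeasure Ω) : EReal :=
  ⨆ g : X, ((μ.integral g : ℝ) : EReal) - φ g

lemma exists_simple_approx {Ω : Type*} [MeasurableSpace Ω] (g : Ω → ℝ) (hg : Measurable g)
    (M : ℝ) (hM : ∀ ω, |g ω| ≤ M) {δ : ℝ} (hδ : 0 < δ) :
    ∃ s : SimpleFunc Ω ℝ, (∀ ω, s ω ≤ g ω) ∧ (∀ ω, g ω ≤ s ω + δ) := by
  have hmeas : Measurable fun ω => δ * (⌊g ω / δ⌋ : ℝ) := by
    have h1 : Measurable fun ω => ⌊g ω / δ⌋ := (hg.div_const δ).floor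
    have h2 : Measurable fun k : ℤ => (k : ℝ) := measurable_from_top
    exact measurable_const.mul (h2.comp h1)
  have hcancel : ∀ ω, δ * (g ω / δ) = g ω := fun ω => by field_simp
  refine ⟨⟨fun ω => δ * (⌊g ω / δ⌋ : ℝ), fun x => hmeas (measurableSet_singleton x), ?_⟩, ?_, ?_⟩
  · apply Set.Finite.subset (((Set.finite_Icc (⌊-M / δ⌋) (⌊M / δ⌋)).image (fun k : ℤ => δ * (k : ℝ))))
    rintro _ ⟨ω, rfl⟩
    obtain ⟨hl, hr⟩ := abs_le.mp (hM ω)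
    refine ⟨⌊g ω / δ⌋, ⟨?_, ?_⟩, rfl⟩
    · exact Int.floor_le_floor (by gcongr)
    · exact Int.floor_le_floor (by gcongr)
  · intro ω
    have := mul_le_mul_of_nonneg_left (Int.floor_le (g ω / δ)) hδ.le
    simpa [hcancel ω] using this
  · intro ω
    have := mul_lt_mul_of_pos_left (Int.lt_floor_add_one (g ω / δ)) hδ
    rw [mul_add, mul_one, hcancel ω] at this
    exact this.le

lemma simpleFunc_eq_sum {Ω : Type*} [MeasurableSpace Ω] (s : SimpleFunc Ω ℝ) :
    (s : Ω → ℝ) = ∑ x ∈ s.range, x • (s ⁻¹' {x}).indicator (fun _ => (1:ℝ)) := by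
  funext ω
  rw [Finset.sum_apply, Finset.sum_eq_single (s ω)]
  · simp [Set.indicator_of_mem]
  · intro b _ hb
    have hω : ω ∉ s ⁻¹' {b} := by simp [Ne.symm hb]
    simp [Set.indicator_of_notMem hω]
  · intro h; exact absurd (SimpleFunc.mem_range_self s ω) h

lemma simpleFunc_mem {Ω : Type*} [MeasurableSpace Ω] (X : Submodule ℝ (Ω → ℝ))
    (hXind : ∀ A : Set Ω, MeasurableSet A → A.indicator (fun _ => (1 : ℝ)) ∈ X)
    (s : SimpleFunc Ω ℝ) : (s : Ω → ℝ) ∈ X := by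
  rw [simpleFunc_eq_sum s]
  exact Submodule.sum_mem _ fun x _ => Submodule.smul_mem _ _ (hXind _ (s.measurableSet_fiber x))

/-- Difference-quotient set for the directional derivative of `φ` at `f` in direction `h`. -/
def dqSet {Ω : Type*} (X : Submodule ℝ (Ω → ℝ)) (φ : X → EReal) (f h : X) : Set ℝ :=
  {r | ∃ lam : ℝ, 0 < lam ∧ φ (f + lam • h) < ⊤ ∧
    r = ((φ (f + lam • h)).toReal - (φ f).toReal) / lam}

set_option maxHeartbeats 1000000 in
theorem stmt0 {Ω : Type*} [MeasurableSpace Ω] (X : Submodule ℝ (Ω → ℝ))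
    (hXmeas : ∀ f ∈ X, Measurable f)
    (hXbdd : ∀ f ∈ X, ∃ M : ℝ, ∀ ω, |f ω| ≤ M)
    (hXind : ∀ A : Set Ω, MeasurableSet A → A.indicator (fun _ => (1 : ℝ)) ∈ X)
    (φ : X → EReal) (hbot : ∀ f, φ f ≠ ⊥)
    (hmono : ∀ f g : X, (∀ ω, (g : Ω → ℝ) ω ≤ (f : Ω → ℝ) ω) → φ g ≤ φ f)
    (hconv : ∀ f g : X, ∀ a b : ℝ, 0 ≤ a → 0 ≤ b → a + b = 1 →
      φ (a • f + b • g) ≤ (a : EReal) * φ f + (b : EReal) * φ g) :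
    ∀ f : X, (φ f < ⊤ ∧ ∀ g : X, ∃ ε > (0 : ℝ), ∀ lam : ℝ, 0 ≤ lam → lam ≤ ε →
        φ (f + lam • g) < ⊤) →
      (∃ μ : FinAddMeasure Ω, φ f = ((μ.integral f : ℝ) : EReal) - faConj X φ μ) ∧
      (∀ μ : FinAddMeasure Ω, ((μ.integral f : ℝ) : EReal) - faConj X φ μ ≤ φ f) := by
  classical
  intro f hf
  obtain ⟨hftop, hfint⟩ := hf
  set Φ : X → ℝ := fun g => (φ g).toReal with hΦdef
  have hre : ∀ g : X, φ g < ⊤ → φ g = ((Φ g : ℝ) : EReal) :=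
    fun g h => (EReal.coe_toReal h.ne (hbot g)).symm
  -- real-valued convexity
  have hconvR : ∀ (u v : X) (a b : ℝ), 0 ≤ a → 0 ≤ b → a + b = 1 → φ u < ⊤ → φ v < ⊤ →
      φ (a • u + b • v) < ⊤ ∧ Φ (a • u + b • v) ≤ a * Φ u + b * Φ v := by
    intro u v a b ha hb hab hu hv
    have h := hconv u v a b ha hb hab
    rw [hre u hu, hre v hv, ← EReal.coe_mul, ← EReal.coe_mul, ← EReal.coe_add] at h
    refine ⟨lt_of_le_of_lt h (EReal.coe_lt_top _), ?_⟩
    have := EReal.toReal_le_toReal h (hbot _) (EReal.coe_ne_top _)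
    rw [EReal.toReal_coe] at this
    exact this
  have hfin : ∀ h : X, ∃ lam : ℝ, 0 < lam ∧ φ (f + lam • h) < ⊤ := by
    intro h
    obtain ⟨ε, hε, hh⟩ := hfint h
    exact ⟨ε, hε, hh ε hε.le le_rfl⟩
  have hSne : ∀ h : X, (dqSet X φ f h).Nonempty := by
    intro h
    obtain ⟨lam, h1, h2⟩ := hfin h
    exact ⟨_, lam, h1, h2, rfl⟩
  -- key convexity estimate for difference quotients
  have hkey : ∀ (h k : X) (lam sig : ℝ), 0 < lam → 0 < sig →
      φ (f + lam • h) < ⊤ → φ (f + sig • k) < ⊤ →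
      φ (f + (lam * sig / (lam + sig)) • (h + k)) < ⊤ ∧
      (Φ (f + (lam * sig / (lam + sig)) • (h + k)) - Φ f) / (lam * sig / (lam + sig)) ≤
        (Φ (f + lam • h) - Φ f) / lam + (Φ (f + sig • k) - Φ f) / sig := by
    intro h k lam sig hlam hsig hhtop hktop
    have hs : 0 < lam + sig := by linarith
    have h1 : sig / (lam + sig) + lam / (lam + sig) = 1 := by
      field_simp
      ring
    have h2 : (sig / (lam + sig)) * lam = lam * sig / (lam + sig) := by ring
    have h3 : (lam / (lam + sig)) * sig = lam * sig / (lam + sig) := by ring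
    have heq : (sig / (lam + sig)) • (f + lam • h) + (lam / (lam + sig)) • (f + sig • k) =
        f + (lam * sig / (lam + sig)) • (h + k) := by
      calc (sig / (lam + sig)) • (f + lam • h) + (lam / (lam + sig)) • (f + sig • k)
          = (sig / (lam + sig) + lam / (lam + sig)) • f +
            ((sig / (lam + sig)) * lam) • h + ((lam / (lam + sig)) * sig) • k := by
              match_scalars <;> ring
        _ = f + (lam * sig / (lam + sig)) • (h + k) := by
            rw [h1, h2, h3, one_smul, smul_add]; abel
    obtain ⟨htop, hΦle⟩ := hconvR (f + lam • h) (f + sig • k) _ _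
      (by positivity) (by positivity) h1 hhtop hktop
    rw [heq] at htop hΦle
    refine ⟨htop, ?_⟩
    have hτ : 0 < lam * sig / (lam + sig) := by positivity
    calc (Φ (f + (lam * sig / (lam + sig)) • (h + k)) - Φ f) / (lam * sig / (lam + sig))
        ≤ ((sig / (lam + sig)) * Φ (f + lam • h) + (lam / (lam + sig)) * Φ (f + sig • k) - Φ f) /
            (lam * sig / (lam + sig)) := by gcongr
      _ = (Φ (f + lam • h) - Φ f) / lam + (Φ (f + sig • k) - Φ f) / sig := by
          field_simp
          ring
  have hbdd : ∀ h : X, BddBelow (dqSet X φ f h) := by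
    intro h
    obtain ⟨sig, hsig, hstop⟩ := hfin (-h)
    refine ⟨-((Φ (f + sig • (-h)) - Φ f) / sig), ?_⟩
    rintro r ⟨lam, hlam, hltop, rfl⟩
    obtain ⟨-, hineq⟩ := hkey h (-h) lam sig hlam hsig hltop hstop
    rw [add_neg_cancel, smul_zero, add_zero, sub_self, zero_div] at hineq
    linarith
  set q : X → ℝ := fun h => sInf (dqSet X φ f h) with hqdef
  have hq_le : ∀ (h : X) (r : ℝ), r ∈ dqSet X φ f h → q h ≤ r :=
    fun h r hr => csInf_le (hbdd h) hr
  have hq_add : ∀ h k : X, q (h + k) ≤ q h + q k := by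
    intro h k
    have H : ∀ a ∈ dqSet X φ f h, ∀ b ∈ dqSet X φ f k, q (h + k) ≤ a + b := by
      rintro a ⟨lam, hlam, hltop, rfl⟩ b ⟨sig, hsig, hstop, rfl⟩
      obtain ⟨htop, hineq⟩ := hkey h k lam sig hlam hsig hltop hstop
      refine le_trans (hq_le _ _ ⟨_, by positivity, htop, rfl⟩) hineq
    have H2 : ∀ b ∈ dqSet X φ f k, q (h + k) - b ≤ q h :=
      fun b hb => le_csInf (hSne h) fun a ha => by linarith [H a ha b hb]
    have H3 : q (h + k) - q h ≤ q k :=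
      le_csInf (hSne k) fun b hb => by linarith [H2 b hb]
    linarith
  have hq_smul : ∀ c : ℝ, 0 < c → ∀ h : X, q (c • h) = c * q h := by
    intro c hc h
    have hB : ∀ r ∈ dqSet X φ f h, c * r ∈ dqSet X φ f (c • h) := by
      rintro r ⟨lam, hlam, hltop, rfl⟩
      refine ⟨lam / c, by positivity, ?_, ?_⟩
      · rwa [smul_smul, div_mul_cancel₀ _ hc.ne']
      · rw [smul_smul, div_mul_cancel₀ _ hc.ne']
        field_simp
    have hA : ∀ r ∈ dqSet X φ f (c • h), ∃ r' ∈ dqSet X φ f h, r = c * r' := by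
      rintro r ⟨lam, hlam, hltop, rfl⟩
      rw [smul_smul] at hltop
      refine ⟨((φ (f + (lam * c) • h)).toReal - (φ f).toReal) / (lam * c),
        ⟨lam * c, by positivity, hltop, rfl⟩, ?_⟩
      rw [smul_smul]
      field_simp
    apply le_antisymm
    · have hdiv : q (c • h) / c ≤ q h := by
        refine le_csInf (hSne h) fun r hr => ?_
        rw [div_le_iff₀ hc]
        have := hq_le _ _ (hB r hr)
        linarith [mul_comm c r ▸ this]
      have h' := (div_le_iff₀ hc).mp hdiv
      rw [mul_comm]
      exact h'
    · refine le_csInf (hSne (c • h)) fun r hr => ?_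
      obtain ⟨r', hr', rfl⟩ := hA r hr
      have := hq_le _ _ hr'
      nlinarith
  have hq0 : 0 ≤ q 0 := by
    have := hq_add 0 0
    rw [add_zero] at this
    linarith
  -- Hahn-Banach: a linear functional dominated by q
  obtain ⟨ℓ, -, hℓ⟩ := exists_extension_of_le_sublinear (⟨⊥, 0⟩ : (X →ₗ.[ℝ] ℝ)) q
    hq_smul hq_add (by
      rintro ⟨x, hx⟩
      rw [Submodule.mem_bot] at hx
      subst hx
      simpa using hq0)
  -- subgradient inequality
  have hsub : ∀ g : X, φ g < ⊤ → ℓ g - ℓ f ≤ Φ g - Φ f := by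
    intro g hg
    have heq : f + (1 : ℝ) • (g - f) = g := by module
    have h1 : q (g - f) ≤ Φ g - Φ f := by
      refine hq_le _ _ ⟨1, one_pos, ?_, ?_⟩
      · rw [heq]; exact hg
      · rw [heq, div_one]
    calc ℓ g - ℓ f = ℓ (g - f) := by rw [map_sub]
      _ ≤ q (g - f) := hℓ _
      _ ≤ Φ g - Φ f := h1
  have hpos : ∀ h : X, (∀ ω, 0 ≤ (h : Ω → ℝ) ω) → 0 ≤ ℓ h := by
    intro h hh
    have hle : φ (f - h) ≤ φ f := by
      refine hmono f (f - h) fun ω => ?_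
      have : ((f - h : X) : Ω → ℝ) ω = (f : Ω → ℝ) ω - (h : Ω → ℝ) ω := by simp
      rw [this]
      linarith [hh ω]
    have htop : φ (f - h) < ⊤ := lt_of_le_of_lt hle hftop
    have hΦle : Φ (f - h) ≤ Φ f := EReal.toReal_le_toReal hle (hbot _) hftop.ne
    have h1 := hsub (f - h) htop
    rw [map_sub] at h1
    linarith
  have hmonoℓ : ∀ u v : X, (∀ ω, (u : Ω → ℝ) ω ≤ (v : Ω → ℝ) ω) → ℓ u ≤ ℓ v := by
    intro u v huv
    have h0 : 0 ≤ ℓ (v - u) := by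
      refine hpos (v - u) fun ω => ?_
      have : ((v - u : X) : Ω → ℝ) ω = (v : Ω → ℝ) ω - (u : Ω → ℝ) ω := by simp
      rw [this]
      linarith [huv ω]
    rw [map_sub] at h0
    linarith
  -- the finitely additive measure induced by ℓ
  set μ : FinAddMeasure Ω :=
    { meas := fun A => if hA : MeasurableSet A then ℓ ⟨A.indicator (fun _ => 1), hXind A hA⟩ else 0
      nonneg := by
        intro A
        split_ifs with hA
        · exact hpos _ fun ω => Set.indicator_nonneg (fun _ _ => zero_le_one) ω
        · exact le_refl 0
      empty := by
        rw [dif_pos MeasurableSet.empty]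
        have : (⟨Set.indicator ∅ (fun _ => 1), hXind ∅ MeasurableSet.empty⟩ : X) = 0 :=
          Subtype.ext (by funext ω; simp)
        rw [this, map_zero]
      additive := by
        intro A B hA hB hAB
        rw [dif_pos (hA.union hB), dif_pos hA, dif_pos hB, ← map_add]
        congr 1
        refine Subtype.ext ?_
        simp only [Submodule.coe_add]
        exact Set.indicator_union_of_disjoint hAB _ } with hμdef
  have hmeas_eq : ∀ (A : Set Ω) (hA : MeasurableSet A),
      μ.meas A = ℓ ⟨A.indicator (fun _ => 1), hXind A hA⟩ := by
    intro A hA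
    simp only [hμdef]
    rw [dif_pos hA]
  -- ℓ of a simple function equals its elementary integral
  have hsint : ∀ s : SimpleFunc Ω ℝ, ℓ ⟨s, simpleFunc_mem X hXind s⟩ = μ.simpleIntegral s := by
    intro s
    have hdecomp : (⟨(s : Ω → ℝ), simpleFunc_mem X hXind s⟩ : X) =
        ∑ x ∈ s.range, x • (⟨(s ⁻¹' {x}).indicator (fun _ => (1:ℝ)),
          hXind _ (s.measurableSet_fiber x)⟩ : X) := by
      refine Subtype.ext ?_
      rw [Submodule.coe_sum]
      simp only [SetLike.val_smul]
      exact simpleFunc_eq_sum s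
    rw [hdecomp, map_sum, FinAddMeasure.simpleIntegral]
    refine Finset.sum_congr rfl fun x hx => ?_
    rw [_root_.map_smul, smul_eq_mul, hmeas_eq _ (s.measurableSet_fiber x)]
  -- constant one function
  have h1mem : (fun _ : Ω => (1 : ℝ)) ∈ X := by
    have := hXind Set.univ MeasurableSet.univ
    simpa [Set.indicator_univ] using this
  have hℓ1 : 0 ≤ ℓ ⟨fun _ => 1, h1mem⟩ := hpos _ fun ω => zero_le_one
  -- the integral against μ coincides with ℓ on X
  have hub : ∀ g : X, ∀ r ∈ {r | ∃ s : SimpleFunc Ω ℝ,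
      (∀ ω, s ω ≤ (g : Ω → ℝ) ω) ∧ r = μ.simpleIntegral s}, r ≤ ℓ g := by
    rintro g r ⟨s, hs, rfl⟩
    rw [← hsint s]
    exact hmonoℓ _ _ hs
  have hne : ∀ g : X, Set.Nonempty {r | ∃ s : SimpleFunc Ω ℝ,
      (∀ ω, s ω ≤ (g : Ω → ℝ) ω) ∧ r = μ.simpleIntegral s} := by
    intro g
    obtain ⟨M, hM⟩ := hXbdd g g.2
    exact ⟨μ.simpleIntegral (SimpleFunc.const Ω (-M)), SimpleFunc.const Ω (-M),
      fun ω => by simpa using (abs_le.mp (hM ω)).1, rfl⟩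
  have hinteq : ∀ g : X, μ.integral (g : Ω → ℝ) = ℓ g := by
    intro g
    rw [FinAddMeasure.integral]
    apply le_antisymm
    · exact csSup_le (hne g) (hub g)
    · apply le_of_forall_pos_le_add
      intro ε hε
      obtain ⟨M, hM⟩ := hXbdd g g.2
      have hd : (0:ℝ) < ε / (ℓ ⟨fun _ => 1, h1mem⟩ + 1) := by positivity
      obtain ⟨s, hs1, hs2⟩ := exists_simple_approx (g : Ω → ℝ) (hXmeas g g.2) M hM hd
      set δ : ℝ := ε / (ℓ ⟨fun _ => 1, h1mem⟩ + 1) with hδdef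
      have key : ℓ g ≤ ℓ ⟨s, simpleFunc_mem X hXind s⟩ + δ * ℓ ⟨fun _ => 1, h1mem⟩ := by
        have h2 : ℓ g ≤ ℓ (⟨(s : Ω → ℝ), simpleFunc_mem X hXind s⟩ + δ • ⟨fun _ => 1, h1mem⟩) := by
          refine hmonoℓ _ _ fun ω => ?_
          have : ((⟨(s : Ω → ℝ), simpleFunc_mem X hXind s⟩ + δ • (⟨fun _ => 1, h1mem⟩ : X) : X) :
              Ω → ℝ) ω = s ω + δ := by
            simp
          rw [this]
          exact hs2 ω
        rwa [map_add, _root_.map_smul, smul_eq_mul] at h2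
      have hmem : μ.simpleIntegral s ∈ {r | ∃ s' : SimpleFunc Ω ℝ,
          (∀ ω, s' ω ≤ (g : Ω → ℝ) ω) ∧ r = μ.simpleIntegral s'} := ⟨s, hs1, rfl⟩
      have hsup : μ.simpleIntegral s ≤ sSup {r | ∃ s' : SimpleFunc Ω ℝ,
          (∀ ω, s' ω ≤ (g : Ω → ℝ) ω) ∧ r = μ.simpleIntegral s'} :=
        le_csSup ⟨ℓ g, hub g⟩ hmem
      have hδℓ : δ * ℓ ⟨fun _ => 1, h1mem⟩ ≤ ε := by
        rw [hδdef]
        rw [div_mul_eq_mul_div, div_le_iff₀ (by positivity)]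
        nlinarith
      rw [← hsint s] at hsup
      linarith
  -- value of the conjugate at μ
  have hΦf : φ f = ((Φ f : ℝ) : EReal) := hre f hftop
  have hconj : faConj X φ μ = ((ℓ f - Φ f : ℝ) : EReal) := by
    apply le_antisymm
    · apply iSup_le
      intro g
      by_cases hg : φ g = ⊤
      · rw [hg, EReal.sub_top]
        exact bot_le
      · have hg' : φ g < ⊤ := lt_top_iff_ne_top.mpr hg
        rw [hre g hg', hinteq g, ← EReal.coe_sub, EReal.coe_le_coe_iff]
        have := hsub g hg'
        linarith
    · have heq2 : ((ℓ f - Φ f : ℝ) : EReal) = ((μ.integral (f : Ω → ℝ) : ℝ) : EReal) - φ f := by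
        rw [hinteq f, hΦf, ← EReal.coe_sub]
      rw [heq2]
      exact le_iSup (fun g : X => ((μ.integral (g : Ω → ℝ) : ℝ) : EReal) - φ g) f
  refine ⟨⟨μ, ?_⟩, ?_⟩
  · rw [hconj, hinteq f, ← EReal.coe_sub, hΦf, EReal.coe_eq_coe_iff]
    ring
  · intro ν
    have h1 : ((ν.integral (f : Ω → ℝ) : ℝ) : EReal) - φ f ≤ faConj X φ ν :=
      le_iSup (fun g : X => ((ν.integral (g : Ω → ℝ) : ℝ) : EReal) - φ g) f
    have h2 : ((ν.integral (f : Ω → ℝ) - Φ f : ℝ) : EReal) ≤ faConj X φ ν := by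
      rw [EReal.coe_sub, ← hΦf]
      exact h1
    calc ((ν.integral (f : Ω → ℝ) : ℝ) : EReal) - faConj X φ ν
        ≤ ((ν.integral (f : Ω → ℝ) : ℝ) : EReal) -
            ((ν.integral (f : Ω → ℝ) - Φ f : ℝ) : EReal) := EReal.sub_le_sub le_rfl h2
      _ = ((Φ f : ℝ) : EReal) := by
          rw [← EReal.coe_sub, EReal.coe_eq_coe_iff]
          ring
      _ = φ f := hΦf.symm
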